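/- arXiv:2208.12919 — 5 statements merged into one kernel-verified Lean document; each statement's English description precedes it below -/
import Mathlib

section
/- Let q be a prime power, F_{q^3} the cubic extension of F_q, Tr the trace and N the norm from F_{q^3} to F_q, and let α in F_q be such that x^2 - x - α is irreducible over F_q. Then the number of d in F_{q^3} satisfying Tr(d) + Tr(d^{q^2+q}) + 1 + α = 0 is exactly q^2 - q. -/
open Polynomial


/-- Any element fixed by the `m`-th power map, where `m` is the cardinality of a subfield,
lies in (the image of) that subfield. -/
lemma aux_fixed_mem_range {F W : Type*} [Field F] [Fintype F] [Field W]
    (j : F →+* W) {m : ℕ} (hm : Fintype.card F = m) (hm1 : 1 < m)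
    {z : W} (hz : z ^ m = z) : ∃ w : F, j w = z := by
  classical
  set P : W[X] := X ^ m - X with hP
  have hdeg : P.natDegree = m := by
    rw [hP, Polynomial.natDegree_sub_eq_left_of_natDegree_lt
      (by simpa [Polynomial.natDegree_X, Polynomial.natDegree_X_pow] using hm1),
      Polynomial.natDegree_X_pow]
  have hPne : P ≠ 0 := fun h => by rw [h] at hdeg; simp at hdeg; omega
  have hroot : ∀ w : F, j w ∈ P.roots := by
    intro w
    rw [Polynomial.mem_roots hPne]
    have hw : w ^ m = w := hm ▸ FiniteField.pow_card w
    simp only [hP, Polynomial.IsRoot, Polynomial.eval_sub, Polynomial.eval_pow,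
      Polynomial.eval_X, ← map_pow, hw, sub_self]
  have himg : (Finset.univ.image j : Finset W) ⊆ P.roots.toFinset := by
    intro u hu
    obtain ⟨w, _, rfl⟩ := Finset.mem_image.mp hu
    exact Multiset.mem_toFinset.mpr (hroot w)
  have heq : (Finset.univ.image j : Finset W) = P.roots.toFinset := by
    apply Finset.eq_of_subset_of_card_le himg
    calc P.roots.toFinset.card ≤ Multiset.card P.roots := Multiset.toFinset_card_le _
      _ ≤ P.natDegree := P.card_roots'
      _ = m := hdeg
      _ = (Finset.univ.image j : Finset W).card := by
          rw [Finset.card_image_of_injective _ j.injective, Finset.card_univ, hm]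
  have hzz : z ∈ P.roots.toFinset := by
    rw [Multiset.mem_toFinset, Polynomial.mem_roots hPne]
    simp [hP, Polynomial.IsRoot, hz]
  rw [← heq] at hzz
  obtain ⟨w, _, hw⟩ := Finset.mem_image.mp hzz
  exact ⟨w, hw⟩

/-- If every element of a finite field satisfies `x ^ m = x` with `m > 1`, then the field has
at most `m` elements. -/
lemma aux_card_le {K : Type*} [Field K] [Fintype K] {m : ℕ} (hm1 : 1 < m)
    (h : ∀ x : K, x ^ m = x) : Fintype.card K ≤ m := by
  classical
  set P : K[X] := X ^ m - X with hP
  have hdeg : P.natDegree = m := by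
    rw [hP, Polynomial.natDegree_sub_eq_left_of_natDegree_lt
      (by simpa [Polynomial.natDegree_X, Polynomial.natDegree_X_pow] using hm1),
      Polynomial.natDegree_X_pow]
  have hPne : P ≠ 0 := fun hh => by rw [hh] at hdeg; simp at hdeg; omega
  have hsub : (Finset.univ : Finset K) ⊆ P.roots.toFinset := by
    intro x _
    rw [Multiset.mem_toFinset, Polynomial.mem_roots hPne]
    simp [hP, Polynomial.IsRoot, h x]
  calc Fintype.card K = (Finset.univ : Finset K).card := (Finset.card_univ).symm
    _ ≤ P.roots.toFinset.card := Finset.card_le_card hsub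
    _ ≤ Multiset.card P.roots := Multiset.toFinset_card_le _
    _ ≤ P.natDegree := P.card_roots'
    _ = m := hdeg

/-- If `α ∈ F_q` is such that `x^2 - x - α` is irreducible over `F_q`, then the number of
`d ∈ F_{q^3}` with `Tr(d) + Tr(d^{q^2+q}) + 1 + α = 0` is exactly `q^2 - q`. -/
theorem stmt3 (F E : Type*) [Field F] [Field E] [Fintype F] [Fintype E] [Algebra F E]
    (q : ℕ) (hF : Fintype.card F = q) (hE : Fintype.card E = q ^ 3)
    (α : F) (hα : Irreducible (Polynomial.X ^ 2 - Polynomial.X - Polynomial.C α)) :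
    Nat.card {d : E //
      Algebra.trace F E d + Algebra.trace F E (d ^ (q ^ 2 + q)) + 1 + α = 0} = q ^ 2 - q := by
  classical
  have hq2 : 2 ≤ q := hF ▸ Fintype.one_lt_card
  obtain ⟨p, hpF⟩ := CharP.exists F
  haveI := hpF
  obtain ⟨s, hps, hqps⟩ := FiniteField.card F p
  rw [hF] at hqps
  haveI : Fact p.Prime := ⟨hps⟩
  set W := AlgebraicClosure F with hW
  haveI : CharP W p := charP_of_injective_algebraMap (algebraMap F W).injective p
  haveI : ExpChar W p := ExpChar.prime hps
  haveI hfd : FiniteDimensional F E := Module.Finite.of_finite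
  haveI : Algebra.IsAlgebraic F E := Algebra.IsAlgebraic.of_finite F E
  have hrank : Module.finrank F E = 3 := by
    have hcards : Fintype.card E = Fintype.card F ^ (Module.finrank F E) := Module.card_eq_pow_finrank
    rw [hE, hF] at hcards
    exact Nat.pow_right_injective hq2 hcards.symm
  -- the canonical embedding of E into W
  let ι : E →ₐ[F] W := IsAlgClosed.lift
  have hι : Function.Injective ι := RingHom.injective ι.toRingHom
  have hFq : ∀ c : F, c ^ q = c := fun c => by rw [← hF]; exact FiniteField.pow_card c
  have hφ : ∀ w : W, iterateFrobenius W p (s : ℕ) w = w ^ q := fun w => by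
    rw [iterateFrobenius_def, ← hqps]
  -- Frobenius twist of an embedding
  let frobTwist : (E →ₐ[F] W) → (E →ₐ[F] W) := fun σ =>
    { toRingHom := (iterateFrobenius W p (s : ℕ)).comp σ.toRingHom
      commutes' := fun c => by
        show (iterateFrobenius W p (s : ℕ)) (σ (algebraMap F E c)) = algebraMap F W c
        rw [AlgHom.commutes, hφ, ← map_pow, hFq] }
  have hfrob : ∀ (σ : E →ₐ[F] W) (u : E), frobTwist σ u = (σ u) ^ q := fun σ u => by
    show (iterateFrobenius W p (s : ℕ)) (σ u) = _
    rw [hφ]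
  set σ0 : E →ₐ[F] W := ι with hσ0
  set σ1 : E →ₐ[F] W := frobTwist ι with hσ1
  set σ2 : E →ₐ[F] W := frobTwist σ1 with hσ2
  have hσ1u : ∀ u : E, σ1 u = (ι u) ^ q := fun u => hfrob ι u
  have hσ2u : ∀ u : E, σ2 u = (ι u) ^ (q ^ 2) := fun u => by
    rw [hσ2, hfrob σ1 u, hσ1u u, ← pow_mul, ← pow_two]
  -- cardinality facts
  have hqq3 : q < q ^ 3 := by
    calc q = q ^ 1 := (pow_one q).symm
    _ < q ^ 3 := Nat.pow_lt_pow_right hq2 (by omega)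
  have hq2q3 : q ^ 2 < q ^ 3 := Nat.pow_lt_pow_right hq2 (by omega)
  have hlt : ∀ m : ℕ, 1 < m → (∀ e : E, e ^ m = e) → q ^ 3 ≤ m := fun m hm h =>
    hE ▸ aux_card_le hm h
  have hEq3 : ∀ e : E, e ^ (q ^ 3) = e := fun e => hE ▸ FiniteField.pow_card e
  have h01 : σ0 ≠ σ1 := by
    intro h
    have : ∀ e : E, e ^ q = e := fun e => hι (by rw [map_pow, ← hσ1u e, ← h])
    have := hlt q (by omega) this
    omega
  have h02 : σ0 ≠ σ2 := by
    intro h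
    have : ∀ e : E, e ^ (q ^ 2) = e := fun e => hι (by rw [map_pow, ← hσ2u e, ← h])
    have := hlt (q ^ 2) (by nlinarith) this
    omega
  have h12 : σ1 ≠ σ2 := by
    intro h
    have hkey : ∀ e : E, e ^ q = e ^ (q ^ 2) := fun e => hι (by
      rw [map_pow, map_pow, ← hσ1u e, ← hσ2u e, h])
    have : ∀ e : E, e ^ q = e := by
      intro e
      have h1 : (e ^ q) ^ q = (e ^ (q ^ 2)) ^ q := by rw [hkey e]
      have h2 : e ^ (q ^ 2) = e ^ (q ^ 3) := by
        calc e ^ (q ^ 2) = (e ^ q) ^ q := by rw [← pow_mul, ← pow_two]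
          _ = (e ^ (q ^ 2)) ^ q := h1
          _ = e ^ (q ^ 3) := by rw [← pow_mul, ← pow_succ]
      rw [hkey e, h2, hEq3 e]
    exact absurd (hlt q (by omega) this) (by omega)
  have hcard3 : Fintype.card (E →ₐ[F] W) = 3 := by
    rw [AlgHom.card]; exact hrank
  have huniv : (Finset.univ : Finset (E →ₐ[F] W)) = {σ0, σ1, σ2} := by
    symm
    apply Finset.eq_of_subset_of_card_le (Finset.subset_univ _)
    rw [Finset.card_univ, hcard3]
    rw [Finset.card_insert_of_notMem (by simp [h01, h02]),
      Finset.card_insert_of_notMem (by simp [h12]), Finset.card_singleton]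
  have trace_formula : ∀ u : E,
      algebraMap F W (Algebra.trace F E u) = ι u + (ι u) ^ q + (ι u) ^ (q ^ 2) := by
    intro u
    rw [trace_eq_sum_embeddings (E := W), huniv]
    rw [Finset.sum_insert (by simp [h01, h02]), Finset.sum_insert (by simp [h12]),
      Finset.sum_singleton, hσ1u, hσ2u]
    exact (add_assoc (ι u) _ _).symm
  -- numerology
  set n := q ^ 2 - q + 1 with hn
  have hqq : q ≤ q ^ 2 := Nat.le_self_pow (by norm_num) q
  have hnq : n + q = q ^ 2 + 1 := by rw [hn]; zify [hqq]; ring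
  have hnmul : n * (q + 1) = q ^ 3 + 1 := by rw [hn]; zify [hqq]; ring
  have hn0 : 0 < n := Nat.succ_pos _
  have hqW : (q : W) = 0 := by
    rw [hqps]; push_cast; rw [CharP.cast_eq_zero W p]; exact zero_pow s.pos.ne'
  have hnW : (n : W) = 1 := by
    have h : ((n : W)) + (q : W) = (q : W) ^ 2 + 1 := by exact_mod_cast congrArg (Nat.cast (R := W)) hnq
    rw [hqW] at h
    simpa using h
  -- no root of the quadratic in F
  have hnoroot : ∀ r : F, r ^ 2 - r - α ≠ 0 := by
    intro r hr
    have hdvd : (X - C r) ∣ (X ^ 2 - X - C α : F[X]) := by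
      apply dvd_iff_isRoot.mpr
      simp only [IsRoot.def, eval_sub, eval_pow, eval_X, eval_C]
      exact hr
    obtain ⟨g, hg⟩ := hdvd
    have hdeg2 : (X ^ 2 - X - C α : F[X]).natDegree = 2 := by compute_degree!
    rcases hα.isUnit_or_isUnit hg with h | h
    · exact Polynomial.not_isUnit_X_sub_C r h
    · have hg0 : g.natDegree = 0 := natDegree_eq_zero_of_isUnit h
      have hgne : g ≠ 0 := by
        rintro rfl
        rw [mul_zero] at hg
        rw [hg] at hdeg2
        simp at hdeg2
      rw [hg, natDegree_mul (X_sub_C_ne_zero r) hgne, natDegree_X_sub_C, hg0] at hdeg2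
      omega
  -- a root of X^2 + X - α in W
  set Aα : W := algebraMap F W α with hAα
  have hAαq : Aα ^ q = Aα := by rw [hAα, ← map_pow, hFq]
  obtain ⟨aa, haa⟩ : ∃ aa : W, aa ^ 2 + aa - Aα = 0 := by
    obtain ⟨aa, ha⟩ := IsAlgClosed.exists_root (p := (X ^ 2 + X - C Aα : W[X])) (by
      have : (X ^ 2 + X - C Aα : W[X]).degree = 2 := by compute_degree!
      rw [this]; norm_num)
    exact ⟨aa, by simpa [IsRoot] using ha⟩
  obtain ⟨bb, hbb⟩ : ∃ w : W, w = -1 - aa := ⟨-1 - aa, rfl⟩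
  have hquad : ∀ w : W, (w - aa) * (w - bb) = w ^ 2 + w - Aα := by
    intro w; rw [hbb]; linear_combination -haa
  have hfixed_no : ∀ z : W, z ^ q = z → z ^ 2 + z - Aα ≠ 0 := by
    intro z hzq hz0
    obtain ⟨w, hw⟩ := aux_fixed_mem_range (algebraMap F W) hF (by omega) hzq
    have h0 : algebraMap F W (w ^ 2 + w - α) = 0 := by
      rw [map_sub, map_add, map_pow, hw, ← hAα]
      exact hz0
    have hw0 : w ^ 2 + w - α = 0 := (map_eq_zero_iff _ (algebraMap F W).injective).mp h0
    exact hnoroot (-w) (by linear_combination hw0)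
  have haaq : aa ^ q = bb := by
    have h1 : (aa ^ q) ^ 2 + aa ^ q - Aα = 0 := by
      have h2 : (iterateFrobenius W p (s : ℕ)) (aa ^ 2 + aa - Aα) = 0 := by rw [haa, map_zero]
      rw [map_sub, map_add, map_pow, hφ, hφ, hAαq] at h2
      exact h2
    have h3 : (aa ^ q - aa) * (aa ^ q - bb) = 0 := by rw [hquad]; exact h1
    rcases mul_eq_zero.mp h3 with h4 | h4
    · exact absurd haa (hfixed_no aa (sub_eq_zero.mp h4))
    · exact sub_eq_zero.mp h4
  have haneb : aa ≠ bb := by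
    intro h
    exact hfixed_no aa (by rw [haaq, ← h]) haa
  have hbbq : bb ^ q = aa := by
    have h2 : (iterateFrobenius W p (s : ℕ)) bb = bb ^ q := hφ bb
    rw [hbb, map_sub, map_neg, map_one, hφ, haaq] at h2
    rw [hbb, ← h2, hbb]
    ring
  have haaq2 : aa ^ (q ^ 2) = aa := by rw [pow_two, pow_mul, haaq, hbbq]
  have hbbq2 : bb ^ (q ^ 2) = bb := by rw [pow_two, pow_mul, hbbq, haaq]
  have haaq3 : aa ^ (q ^ 3) = bb := by rw [pow_succ, pow_mul, haaq2, haaq]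
  have hbbq3 : bb ^ (q ^ 3) = aa := by rw [pow_succ, pow_mul, hbbq2, hbbq]
  have hfixE : ∀ e : E, (ι e) ^ (q ^ 3) = ι e := fun e => by rw [← map_pow, hEq3]
  have hax : ∀ e : E, aa - ι e ≠ 0 := by
    intro e h
    apply haneb
    calc aa = ι e := sub_eq_zero.mp h
      _ = (ι e) ^ (q ^ 3) := (hfixE e).symm
      _ = aa ^ (q ^ 3) := by rw [sub_eq_zero.mp h]
      _ = bb := haaq3
  have hbx : ∀ e : E, bb - ι e ≠ 0 := by
    intro e h
    apply haneb
    calc aa = bb ^ (q ^ 3) := hbbq3.symm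
      _ = (ι e) ^ (q ^ 3) := by rw [sub_eq_zero.mp h]
      _ = ι e := hfixE e
      _ = bb := (sub_eq_zero.mp h).symm
  have hinj := (algebraMap F W).injective
  have cond_iff : ∀ d : E,
      (Algebra.trace F E d + Algebra.trace F E (d ^ (q ^ 2 + q)) + 1 + α = 0)
        ↔ ((bb - ι d) / (aa - ι d)) ^ n = 1 := by
    intro d
    set x := ι d with hxdef
    set y := ι (d ^ q) with hydef
    set z := ι (d ^ (q ^ 2)) with hzdef
    have hy2 : y = x ^ q := map_pow ι d q
    have hz2 : z = x ^ (q ^ 2) := map_pow ι d (q ^ 2)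
    have hq3eq : q ^ 2 * q = q ^ 3 := by ring
    have hyq : y ^ q = z := by rw [hy2, hz2, ← pow_mul, ← pow_two]
    have hzq : z ^ q = x := by rw [hz2, ← pow_mul, hq3eq]; exact hfixE d
    -- trace computations
    have htr1 : algebraMap F W (Algebra.trace F E d) = x + y + z := by
      rw [trace_formula d, ← hy2, ← hz2]
    have htr2 : algebraMap F W (Algebra.trace F E (d ^ (q ^ 2 + q)))
        = z * y + x * z + y * x := by
      rw [trace_formula (d ^ (q ^ 2 + q))]
      have e0 : ι (d ^ (q ^ 2 + q)) = z * y := by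
        rw [map_pow, pow_add, ← hz2, ← hy2]
      have e1 : (ι (d ^ (q ^ 2 + q))) ^ q = x * z := by
        rw [e0, mul_pow, hzq, hyq]
      have e2 : (ι (d ^ (q ^ 2 + q))) ^ (q ^ 2) = y * x := by
        have h0 : (ι (d ^ (q ^ 2 + q))) ^ (q ^ 2) = ((ι (d ^ (q ^ 2 + q))) ^ q) ^ q := by
          rw [← pow_mul, ← pow_two]
        rw [h0, e1, mul_pow, hzq, ← hy2]
      rw [e1, e2, e0]
    have hmap : algebraMap F W
        (Algebra.trace F E d + Algebra.trace F E (d ^ (q ^ 2 + q)) + 1 + α)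
        = (x + y + z) + (z * y + x * z + y * x) + 1 + Aα := by
      rw [map_add, map_add, map_add, map_one, htr1, htr2, hAα]
    have key1 : (Algebra.trace F E d + Algebra.trace F E (d ^ (q ^ 2 + q)) + 1 + α = 0)
        ↔ ((x + y + z) + (z * y + x * z + y * x) + 1 + Aα = 0) := by
      rw [← hmap]
      exact (map_eq_zero_iff _ hinj).symm
    have hfactor : (aa - x) * (aa - y) * (aa - z) - (bb - x) * (bb - y) * (bb - z)
        = (aa - bb) * ((x + y + z) + (z * y + x * z + y * x) + 1 + Aα) := by
      have hA' : Aα = aa ^ 2 + aa := by linear_combination -haa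
      rw [hbb, hA']; ring
    have key2 : ((x + y + z) + (z * y + x * z + y * x) + 1 + Aα = 0)
        ↔ ((aa - x) * (aa - y) * (aa - z) = (bb - x) * (bb - y) * (bb - z)) := by
      constructor
      · intro h
        apply sub_eq_zero.mp
        rw [hfactor, h, mul_zero]
      · intro h
        have h2 : (aa - bb) * ((x + y + z) + (z * y + x * z + y * x) + 1 + Aα) = 0 := by
          rw [← hfactor, h, sub_self]
        rcases mul_eq_zero.mp h2 with h3 | h3
        · exact absurd (sub_eq_zero.mp h3) haneb
        · exact h3
    set t := (bb - x) / (aa - x) with htdef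
    have ht0 : t ≠ 0 := div_ne_zero (hbx d) (hax d)
    have htq : t ^ q = (aa - y) / (bb - y) := by
      have h1 := hφ (bb - x)
      rw [map_sub, hφ, hφ, hbbq, ← hy2] at h1
      have h2 := hφ (aa - x)
      rw [map_sub, hφ, hφ, haaq, ← hy2] at h2
      rw [htdef, div_pow, ← h1, ← h2]
    have htq2 : t ^ (q ^ 2) = (bb - z) / (aa - z) := by
      have h0 : t ^ (q ^ 2) = (t ^ q) ^ q := by rw [← pow_mul, ← pow_two]
      have h1 := hφ (aa - y)
      rw [map_sub, hφ, hφ, haaq, hyq] at h1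
      have h2 := hφ (bb - y)
      rw [map_sub, hφ, hφ, hbbq, hyq] at h2
      rw [h0, htq, div_pow, ← h1, ← h2]
    have key3 : ((aa - x) * (aa - y) * (aa - z) = (bb - x) * (bb - y) * (bb - z))
        ↔ t ^ (q ^ 2) * t = t ^ q := by
      rw [htq2, htq, htdef, div_mul_div_comm,
        div_eq_div_iff (mul_ne_zero (hax (d ^ (q ^ 2))) (hax d)) (hbx (d ^ q))]
      constructor
      · intro h; linear_combination -h
      · intro h; linear_combination -h
    have key4 : (t ^ (q ^ 2) * t = t ^ q) ↔ t ^ n = 1 := by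
      have hsplit : t ^ (q ^ 2) * t = t ^ n * t ^ q := by
        rw [← pow_succ, ← pow_add, hnq]
      constructor
      · intro h
        have h2 : t ^ n * t ^ q = 1 * t ^ q := by rw [← hsplit, h, one_mul]
        exact mul_right_cancel₀ (pow_ne_zero q ht0) h2
      · intro h
        rw [hsplit, h, one_mul]
    exact key1.trans (key2.trans (key3.trans key4))
  have hq3big : 1 < q ^ 3 := by omega
  have htne1 : ∀ d : E, (bb - ι d) / (aa - ι d) ≠ 1 := by
    intro d h
    have h2 : bb - ι d = aa - ι d := (div_eq_one_iff_eq (hax d)).mp h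
    apply haneb
    linear_combination -h2
  have hq3p : q ^ 3 = p ^ (3 * (s : ℕ)) := by
    rw [hqps, ← pow_mul, Nat.mul_comm]
  have hsub3 : ∀ u v : W, (u - v) ^ (q ^ 3) = u ^ (q ^ 3) - v ^ (q ^ 3) := by
    intro u v
    rw [hq3p]
    exact sub_pow_expChar_pow ..
  have main : Nat.card {d : E //
      Algebra.trace F E d + Algebra.trace F E (d ^ (q ^ 2 + q)) + 1 + α = 0}
      = Nat.card {t : W // t ^ n = 1 ∧ t ≠ 1} := by
    apply Nat.card_eq_of_bijective
      (fun dd => ⟨(bb - ι dd.1) / (aa - ι dd.1), (cond_iff dd.1).mp dd.2, htne1 dd.1⟩)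
    constructor
    · rintro ⟨d1, hd1⟩ ⟨d2, hd2⟩ h
      have h' : (bb - ι d1) / (aa - ι d1) = (bb - ι d2) / (aa - ι d2) :=
        congrArg Subtype.val h
      rw [div_eq_div_iff (hax d1) (hax d2)] at h'
      have h2 : (aa - bb) * (ι d2 - ι d1) = 0 := by linear_combination h'
      rcases mul_eq_zero.mp h2 with h3 | h3
      · exact absurd (sub_eq_zero.mp h3) haneb
      · exact Subtype.ext (hι (sub_eq_zero.mp h3)).symm
    · rintro ⟨t, htn, htne⟩
      have ht0 : t ≠ 0 := by
        rintro rfl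
        rw [zero_pow hn0.ne'] at htn
        exact zero_ne_one htn
      have h1t : (1 : W) - t ≠ 0 := sub_ne_zero.mpr (Ne.symm htne)
      have hq31 : t ^ (q ^ 3) * t = 1 := by
        rw [← pow_succ, ← hnmul, pow_mul, htn, one_pow]
      have htq3 : t ^ (q ^ 3) = t⁻¹ := eq_inv_of_mul_eq_one_right (by rwa [mul_comm] at hq31)
      have hinv1 : (1 : W) - t⁻¹ ≠ 0 := by
        intro h
        apply htne
        have h2 : t⁻¹ = 1 := by linear_combination -h
        rwa [inv_eq_one] at h2
      set x0 : W := (bb - t * aa) / (1 - t) with hx0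
      have hx0fix : x0 ^ (q ^ 3) = x0 := by
        rw [hx0, div_pow, hsub3, hsub3, mul_pow, one_pow, haaq3, hbbq3, htq3]
        rw [div_eq_div_iff hinv1 h1t]
        have hti := mul_inv_cancel₀ ht0
        linear_combination (bb - aa) * hti
      obtain ⟨e, he⟩ := aux_fixed_mem_range (ι.toRingHom) hE hq3big hx0fix
      have he' : ι e = x0 := he
      have hdAB : aa - bb ≠ 0 := sub_ne_zero.mpr haneb
      have hax0 : aa - x0 = (aa - bb) / (1 - t) := by
        rw [hx0]
        rw [eq_div_iff h1t, sub_mul, div_mul_cancel₀ _ h1t]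
        ring
      have hbx0 : bb - x0 = t * (aa - bb) / (1 - t) := by
        rw [hx0]
        rw [eq_div_iff h1t, sub_mul, div_mul_cancel₀ _ h1t]
        ring
      have hd : (aa - bb) / (1 - t) ≠ 0 := div_ne_zero hdAB h1t
      have htval : (bb - ι e) / (aa - ι e) = t := by
        rw [he', hbx0, hax0, div_eq_iff hd, mul_div_assoc]
      refine ⟨⟨e, (cond_iff e).mpr (by rw [htval]; exact htn)⟩, ?_⟩
      exact Subtype.ext htval
  rw [main]
  -- count the nontrivial n-th roots of unity in W
  have hP0 : (X ^ n - C 1 : W[X]) ≠ 0 := X_pow_sub_C_ne_zero hn0 1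
  have hsep : (X ^ n - C 1 : W[X]).Separable :=
    separable_X_pow_sub_C (F := W) (n := n) 1 (by rw [hnW]; exact one_ne_zero) one_ne_zero
  have hdegP : (X ^ n - C 1 : W[X]).natDegree = n := natDegree_X_pow_sub_C
  have hsplits : (X ^ n - C 1 : W[X]).Splits := IsAlgClosed.splits _
  have hcardroots : Multiset.card (X ^ n - C 1 : W[X]).roots = n := by
    rw [splits_iff_card_roots.mp hsplits, hdegP]
  have hnodup : (X ^ n - C 1 : W[X]).roots.Nodup := nodup_roots hsep
  have hmemiff : ∀ u : W, u ∈ (X ^ n - C 1 : W[X]).roots.toFinset ↔ u ^ n = 1 := by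
    intro u
    rw [Multiset.mem_toFinset, Polynomial.mem_roots hP0]
    simp only [IsRoot.def, eval_sub, eval_pow, eval_X, eval_C, sub_eq_zero]
  have h1mem : (1 : W) ∈ (X ^ n - C 1 : W[X]).roots.toFinset := (hmemiff 1).mpr (one_pow n)
  have hcardT : Nat.card {t : W // t ^ n = 1 ∧ t ≠ 1} = n - 1 := by
    have heqv : {t : W // t ^ n = 1 ∧ t ≠ 1}
        ≃ {t : W // t ∈ (X ^ n - C 1 : W[X]).roots.toFinset.erase 1} :=
      Equiv.subtypeEquivRight (fun u => by rw [Finset.mem_erase, hmemiff]; tauto)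
    rw [Nat.card_congr heqv, Nat.card_eq_fintype_card, Fintype.card_coe,
      Finset.card_erase_of_mem h1mem, Multiset.toFinset_card_of_nodup hnodup, hcardroots]
  rw [hcardT, hn]
  simp
end

section
/- Let q be a prime power, F_{q^3} the cubic extension of F_q, Tr the trace and N the norm from F_{q^3} to F_q, and let α in F_q be such that x^2 - x - α is irreducible over F_q. Then the number of d in F_{q^3} satisfying N(d) - Tr(d^{q^2+q})·α - α^2 = 0 is exactly q^2 - q + 1. -/
open Polynomial
set_option maxHeartbeats 1600000

/-- Elements satisfying `x ^ N = x` lie in the image of a subfield with `N` elements. -/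
theorem stmt4_aux_fix {K L : Type*} [Field K] [Fintype K] [Field L] (f : K →+* L)
    {N : ℕ} (hN : Fintype.card K = N) (hN1 : 1 < N) {x : L} (hx : x ^ N = x) :
    x ∈ Set.range f := by
  classical
  by_contra hmem
  have hdeg : (X ^ N - X : L[X]).natDegree = N := by
    rw [natDegree_sub_eq_left_of_natDegree_lt] <;> simp <;> omega
  have hg : (X ^ N - X : L[X]) ≠ 0 := fun h0 => by simp [h0] at hdeg; omega
  set s : Finset L := (Finset.univ.image f) ∪ {x} with hs
  have hcard : s.card = N + 1 := by
    rw [Finset.card_union_of_disjoint (by simpa using fun a _ => hmem ⟨a, by tauto⟩)]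
    · simp [Finset.card_image_of_injective _ f.injective, hN]
  have hsub : s ⊆ (X ^ N - X : L[X]).roots.toFinset := by
    intro y hy
    rw [Multiset.mem_toFinset, mem_roots hg]
    simp only [hs, Finset.mem_union, Finset.mem_image, Finset.mem_singleton] at hy
    rcases hy with ⟨a, _, rfl⟩ | rfl
    · simp [IsRoot, eval_pow, ← map_pow, ← hN, FiniteField.pow_card]
    · simp [IsRoot, hx]
  have := (Finset.card_le_card hsub).trans ((Multiset.toFinset_card_le _).trans
    ((X ^ N - X : L[X]).card_roots'.trans_eq hdeg))
  omega

/-- In a finite field, not all elements can satisfy `x ^ m = x` when `m` is small. -/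
theorem stmt4_aux_ex {K : Type*} [Field K] [Fintype K] {m : ℕ} (hm : 1 < m)
    (hcard : m < Fintype.card K) : ∃ x : K, x ^ m ≠ x := by
  classical
  by_contra h
  push_neg at h
  have hdeg : (X ^ m - X : K[X]).natDegree = m := by
    rw [natDegree_sub_eq_left_of_natDegree_lt] <;> simp <;> omega
  have hg : (X ^ m - X : K[X]) ≠ 0 := fun h0 => by simp [h0] at hdeg; omega
  have hsub : (Finset.univ : Finset K) ⊆ (X ^ m - X : K[X]).roots.toFinset := by
    intro y _
    rw [Multiset.mem_toFinset, mem_roots hg]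
    simp [IsRoot, h y]
  have := (Finset.card_le_card hsub).trans ((Multiset.toFinset_card_le _).trans
    ((X ^ m - X : K[X]).card_roots'.trans_eq hdeg))
  simp only [Finset.card_univ] at this
  omega

/-- Counting solutions of `x ^ n = c` in a finite field via cyclicity of the unit group. -/
theorem stmt4_aux_count {L : Type*} [Field L] [Fintype L] {n m : ℕ} (hn : 0 < n) (hm : 0 < m)
    (hnm : n * m = Fintype.card L - 1) (c : L) (hc0 : c ≠ 0) (hc : c ^ m = 1) :
    Nat.card {x : L // x ^ n = c} = n := by
  classical
  set cu : Lˣ := Units.mk0 c hc0 with hcu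
  have e1 : {x : L // x ^ n = c} ≃ {u : Lˣ // u ^ n = cu} :=
    { toFun := fun x => ⟨Units.mk0 x.1 (fun h0 => hc0 (by
        rw [← x.2, h0, zero_pow hn.ne'])), by
        ext; push_cast; exact x.2⟩
      invFun := fun u => ⟨u.1.1, by
        have := u.2
        have := congrArg (Units.val) this
        push_cast at this; exact this⟩
      left_inv := fun x => by ext; simp
      right_inv := fun u => by ext; simp }
  rw [Nat.card_congr e1]
  have hcardU : Fintype.card Lˣ = n * m := by rw [Fintype.card_units, hnm]
  obtain ⟨g, hg⟩ := IsCyclic.exists_generator (α := Lˣ)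
  have horder : orderOf g = n * m := by
    rw [orderOf_eq_card_of_forall_mem_zpowers hg, Nat.card_eq_fintype_card, hcardU]
  have hpow : ∀ x : Lˣ, ∃ k : ℕ, g ^ k = x := by
    intro x
    have := hg x
    rw [← mem_powers_iff_mem_zpowers] at this
    exact (Submonoid.mem_powers_iff _ _).mp this
  obtain ⟨k, hk⟩ := hpow cu
  have hdvd : n ∣ k := by
    have h1 : g ^ (k * m) = 1 := by
      rw [pow_mul, hk]; ext; push_cast; exact hc
    have h2 : orderOf g ∣ k * m := orderOf_dvd_of_pow_eq_one h1
    rw [horder] at h2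
    exact Nat.dvd_of_mul_dvd_mul_right hm h2
  set x₀ : Lˣ := g ^ (k / n) with hx₀
  have hx₀n : x₀ ^ n = cu := by
    rw [hx₀, ← pow_mul, Nat.div_mul_cancel hdvd, hk]
  set ζ : Lˣ := g ^ m with hζ
  have hζord : orderOf ζ = n := by
    rw [hζ, orderOf_pow, horder, Nat.gcd_eq_right (dvd_mul_left m n), Nat.mul_div_cancel _ hm]
  have hζn : ζ ^ n = 1 := by
    rw [← hζord, pow_orderOf_eq_one]
  have e2 : Fin n ≃ {u : Lˣ // u ^ n = cu} := by
    apply Equiv.ofBijective (fun j => ⟨x₀ * ζ ^ (j : ℕ), by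
      rw [mul_pow, hx₀n, ← pow_mul, mul_comm (j : ℕ) n, pow_mul, hζn, one_pow, mul_one]⟩)
    constructor
    · intro a b hab
      have : x₀ * ζ ^ (a : ℕ) = x₀ * ζ ^ (b : ℕ) := congrArg Subtype.val hab
      have h2 : ζ ^ (a : ℕ) = ζ ^ (b : ℕ) := mul_left_cancel this
      have h3 := (pow_eq_pow_iff_modEq).mp h2
      rw [hζord] at h3
      exact Fin.ext ((Nat.ModEq.eq_of_lt_of_lt h3 a.2 b.2))
    · rintro ⟨u, hu⟩
      obtain ⟨j, hj⟩ := hpow (x₀⁻¹ * u)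
      have hj1 : (x₀⁻¹ * u) ^ n = 1 := by
        rw [mul_pow, hu, inv_pow, hx₀n, inv_mul_cancel]
      rw [← hj] at hj1
      have hmdvd : m ∣ j := by
        have hj2 : g ^ (j * n) = 1 := by rw [pow_mul, hj1]
        have h4 := orderOf_dvd_of_pow_eq_one hj2
        rw [horder] at h4
        have h5 : m * n ∣ j * n := by rwa [mul_comm n m] at h4
        exact Nat.dvd_of_mul_dvd_mul_right hn h5
      refine ⟨⟨(j / m) % n, Nat.mod_lt _ hn⟩, Subtype.ext ?_⟩
      show (x₀ * ζ ^ ((j / m) % n) : Lˣ) = u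
      have hζj : ζ ^ ((j / m) % n) = ζ ^ (j / m) := by
        apply (pow_eq_pow_iff_modEq).mpr
        rw [hζord]
        exact (Nat.mod_modEq _ _)
      rw [hζj, hζ, ← pow_mul, mul_comm m (j/m), Nat.div_mul_cancel hmdvd, hj]
      group
  rw [← Nat.card_congr e2, Nat.card_eq_fintype_card, Fintype.card_fin]

/-- The key algebraic equivalence: the norm/trace condition is equivalent to a power
condition on `β + d` in the quadratic extension. -/
theorem stmt4_aux_key {E L : Type*} [Field E] [Field L] [Algebra E L]
    {q : ℕ} (hq1 : 1 < q)
    (αE : E) (β : L) (hβeq : β ^ 2 = β + algebraMap E L αE)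
    (hβnotE : β ∉ Set.range (algebraMap E L))
    (hβq : β ^ q = 1 - β) (hβq2 : β ^ q ^ 2 = β)
    (φ : L →+* L) (hφdef : ∀ x : L, φ x = x ^ q)
    (d : E) (hd3 : d ^ q ^ 3 = d) :
    ((algebraMap E L) (d * d ^ q * d ^ q ^ 2
        - αE * (d ^ q ^ 2 * d ^ q + d * d ^ q ^ 2 + d * d ^ q) - αE ^ 2) = 0)
      ↔ (β + algebraMap E L d) ^ ((q ^ 4 + q ^ 2 + 1) * (q - 1)) = β ^ (2 * (q - 1)) := by
  set i := algebraMap E L with hi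
  set D : L := i d with hD
  set aL : L := i αE with haL
  have hβ0 : β ≠ 0 := fun h => hβnotE ⟨0, by simp [h]⟩
  have h2β : (2 : L) * β - 1 ≠ 0 := by
    intro h
    rcases eq_or_ne (2 : L) 0 with h2 | h2
    · rw [h2, zero_mul] at h; simp at h
    · exact hβnotE ⟨(2 : E)⁻¹, by
        rw [map_inv₀, map_ofNat]
        field_simp
        linear_combination -h⟩
  set x : L := β + D with hx
  have hx0 : x ≠ 0 := by
    rw [hx]
    intro h
    exact hβnotE ⟨-d, by rw [map_neg, ← hD]; linear_combination -h⟩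
  have hD3 : D ^ q ^ 3 = D := by rw [hD, ← map_pow, hd3]
  have hD4 : D ^ q ^ 4 = D ^ q := by
    rw [show q ^ 4 = q ^ 3 * q by ring, pow_mul, hD3]
  set φ2 : L →+* L := φ.comp φ with hφ2def
  have hφ2 : ∀ z : L, φ2 z = z ^ q ^ 2 := by
    intro z; rw [hφ2def, RingHom.comp_apply, hφdef, hφdef, ← pow_mul, pow_two]
  have hxq2 : x ^ q ^ 2 = β + D ^ q ^ 2 := by
    rw [← hφ2 x, hx, map_add, hφ2, hφ2, hβq2]
  have hxq4 : x ^ q ^ 4 = β + D ^ q := by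
    have h4 : x ^ q ^ 4 = (x ^ q ^ 2) ^ q ^ 2 := by rw [← pow_mul]; ring_nf
    rw [h4, hxq2, ← hφ2, map_add, hφ2, hφ2, hβq2, ← pow_mul,
      show q ^ 2 * q ^ 2 = q ^ 4 by ring, hD4]
  set v : L := x * (β + D ^ q) * (β + D ^ q ^ 2) with hv
  have hvm : v = x ^ (q ^ 4 + q ^ 2 + 1) := by
    rw [pow_add, pow_add, pow_one, hxq2, hxq4, hv]; ring
  have hvq : v ^ q = ((1 - β) + D) * ((1 - β) + D ^ q) * ((1 - β) + D ^ q ^ 2) := by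
    have h1 : v ^ q = φ v := (hφdef v).symm
    rw [h1, hv, map_mul, map_mul, map_add, map_add, map_add]
    rw [hφdef β, hφdef D, hφdef (D ^ q), hφdef (D ^ q ^ 2), hβq]
    rw [← pow_mul, ← pow_mul]
    rw [show q ^ 2 * q = q ^ 3 by ring, hD3, show q * q = q ^ 2 by ring]
    ring
  have hkey : β ^ 2 * v ^ q - (1 - β) ^ 2 * v =
      ((2 : L) * β - 1) * (D * D ^ q * D ^ q ^ 2
        - aL * (D ^ q ^ 2 * D ^ q + D * D ^ q ^ 2 + D * D ^ q) - aL ^ 2) := by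
    rw [hvq, hv, hx]
    linear_combination ((2 : L) * β - 1) * (β - β ^ 2 - aL
      - (D ^ q ^ 2 * D ^ q + D * D ^ q ^ 2 + D * D ^ q)) * hβeq
  constructor
  · intro h
    have h0 : (i) (d * d ^ q * d ^ q ^ 2
        - αE * (d ^ q ^ 2 * d ^ q + d * d ^ q ^ 2 + d * d ^ q) - αE ^ 2)
        = D * D ^ q * D ^ q ^ 2
        - aL * (D ^ q ^ 2 * D ^ q + D * D ^ q ^ 2 + D * D ^ q) - aL ^ 2 := by
      push_cast [map_sub, map_mul, map_add, map_pow]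
      ring
    rw [h0] at h
    have h1 : β ^ 2 * v ^ q = (1 - β) ^ 2 * v := by
      have := hkey
      rw [h, mul_zero, sub_eq_zero] at this
      exact this
    have hq0 : 1 ≤ q := by omega
    have hb2q : (1 - β) ^ 2 = β ^ (2 * (q - 1)) * β ^ 2 := by
      rw [← pow_add, show 2 * (q - 1) + 2 = q * 2 by omega, pow_mul, hβq]
    have h2 : v ^ q = β ^ (2 * (q - 1)) * v := by
      have := h1
      rw [hb2q] at this
      have h3 : β ^ 2 * v ^ q = β ^ 2 * (β ^ (2 * (q - 1)) * v) := by
        rw [this]; ring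
      exact mul_left_cancel₀ (pow_ne_zero 2 hβ0) h3
    have h4 : x ^ ((q ^ 4 + q ^ 2 + 1) * (q - 1)) * x ^ (q ^ 4 + q ^ 2 + 1)
        = β ^ (2 * (q - 1)) * x ^ (q ^ 4 + q ^ 2 + 1) := by
      rw [← pow_add]
      rw [show (q ^ 4 + q ^ 2 + 1) * (q - 1) + (q ^ 4 + q ^ 2 + 1)
        = (q ^ 4 + q ^ 2 + 1) * q by
          cases' Nat.exists_eq_add_of_le hq0 with r hr
          subst hr; simp [Nat.add_sub_cancel_left]; ring]
      rw [pow_mul, ← hvm, h2, hvm]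
    exact mul_right_cancel₀ (pow_ne_zero _ hx0) h4
  · intro h
    have hq0 : 1 ≤ q := by omega
    have h2 : v ^ q = β ^ (2 * (q - 1)) * v := by
      rw [hvm, ← pow_mul, show (q ^ 4 + q ^ 2 + 1) * q = (q ^ 4 + q ^ 2 + 1) * (q - 1)
          + (q ^ 4 + q ^ 2 + 1) by
        cases' Nat.exists_eq_add_of_le hq0 with r hr
        subst hr; simp [Nat.add_sub_cancel_left]; ring]
      rw [pow_add, h]
    have hb2q : (1 - β) ^ 2 = β ^ (2 * (q - 1)) * β ^ 2 := by
      rw [← pow_add, show 2 * (q - 1) + 2 = q * 2 by omega, pow_mul, hβq]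
    have h1 : β ^ 2 * v ^ q - (1 - β) ^ 2 * v = 0 := by
      rw [h2, hb2q]; ring
    rw [hkey] at h1
    have h3 := (mul_eq_zero.mp h1).resolve_left h2β
    rw [← h3]
    push_cast [map_sub, map_mul, map_add, map_pow]
    ring

/-- If `α ∈ F_q` is such that `x^2 - x - α` is irreducible over `F_q`, then the number of
`d ∈ F_{q^3}` with `N(d) - Tr(d^{q^2+q})·α - α^2 = 0` is exactly `q^2 - q + 1`. -/
theorem stmt4 (F E : Type*) [Field F] [Field E] [Fintype F] [Fintype E] [Algebra F E]
    (q : ℕ) (hF : Fintype.card F = q) (hE : Fintype.card E = q ^ 3)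
    (α : F) (hα : Irreducible (Polynomial.X ^ 2 - Polynomial.X - Polynomial.C α)) :
    Nat.card {d : E //
      Algebra.norm F d - Algebra.trace F E (d ^ (q ^ 2 + q)) * α - α ^ 2 = 0} =
      q ^ 2 - q + 1 := by
  classical
  have hq1 : 1 < q := hF ▸ Fintype.one_lt_card
  have hrank : Module.finrank F E = 3 := by
    have h := Module.card_eq_pow_finrank (K := F) (V := E)
    rw [hF, hE] at h
    exact (Nat.pow_right_injective (by omega) h.symm)
  -- the quadratic has no root in E
  have hnoroot : ∀ e : E, e ^ 2 - e - algebraMap F E α ≠ 0 := by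
    intro e he
    have haev : (Polynomial.aeval e) (X ^ 2 - X - C α) = 0 := by simp [he]
    have hmono : (X ^ 2 - X - C α : F[X]).Monic := by monicity!
    have hmin : minpoly F e = X ^ 2 - X - C α :=
      (minpoly.eq_of_irreducible_of_monic hα haev hmono).symm
    have hdvd := minpoly.degree_dvd (x := e) (K := F) (.of_finite F e)
    rw [hmin, hrank] at hdvd
    have hnd : (X ^ 2 - X - C α : F[X]).natDegree = 2 := by compute_degree!
    rw [hnd] at hdvd
    omega
  set αE : E := algebraMap F E α with hαE
  have hαq : αE ^ q = αE := by rw [hαE, ← map_pow, ← hF, FiniteField.pow_card]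
  set p : E[X] := X ^ 2 - X - C αE with hp
  have hpmonic : p.Monic := by rw [hp]; monicity!
  have hpdeg : p.natDegree = 2 := by rw [hp]; compute_degree!
  have hpirr : Irreducible p := by
    rw [Polynomial.Monic.irreducible_iff_roots_eq_zero_of_degree_le_three hpmonic
      (by omega) (by omega)]
    by_contra h
    obtain ⟨e, he⟩ := Multiset.exists_mem_of_ne_zero h
    have := (mem_roots (hpmonic.ne_zero)).mp he
    apply hnoroot e
    simpa [hp, IsRoot, sub_eq_zero] using this
  -- the quadratic extension L of E
  haveI : Fact (Irreducible p) := ⟨hpirr⟩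
  set L := AdjoinRoot p with hL
  set i : E →+* L := algebraMap E L with hi
  set β : L := AdjoinRoot.root p with hβ
  have hpb : p ≠ 0 := hpirr.ne_zero
  letI pb : PowerBasis E L := AdjoinRoot.powerBasis hpb
  haveI : Module.Finite E L := pb.finite
  haveI : Finite L := Module.finite_of_finite E
  haveI : Fintype L := Fintype.ofFinite L
  have hrank2 : Module.finrank E L = 2 := by
    rw [pb.finrank, AdjoinRoot.powerBasis_dim, hpdeg]
  have hcardL : Fintype.card L = q ^ 6 := by
    have h := Module.card_eq_pow_finrank (K := E) (V := L)
    rw [hE, hrank2] at h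
    rw [h, ← pow_mul]
  have hβeq : β ^ 2 = β + i αE := by
    have h2 : Polynomial.eval₂ i β (X ^ 2 - X - C αE) = 0 := by
      rw [← hp, hi, AdjoinRoot.algebraMap_eq]; exact AdjoinRoot.eval₂_root p
    simp only [eval₂_sub, eval₂_pow, eval₂_X, eval₂_C] at h2
    have h3 : β ^ 2 - β - i αE = 0 := h2
    linear_combination h3
  have hβnotE : β ∉ Set.range i := by
    rintro ⟨e, he⟩
    apply hnoroot e
    apply i.injective
    rw [map_sub, map_sub, map_pow, he, map_zero]
    rw [hαE] at hβeq ⊢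
    linear_combination hβeq
  -- representation z = a + b β
  have hrepr : ∀ z : L, ∃ a b : E, z = i a + i b * β := by
    intro z
    obtain ⟨f, rfl⟩ := AdjoinRoot.mk_surjective z
    set r : E[X] := f %ₘ p with hr
    have hmk : AdjoinRoot.mk p r = AdjoinRoot.mk p f := by
      rw [hr, Polynomial.modByMonic_eq_sub_mul_div f p]
      rw [map_sub, map_mul, AdjoinRoot.mk_self, zero_mul, sub_zero]
    have hdeg : r.natDegree ≤ 1 := by
      have h1 : r.degree < p.degree := Polynomial.degree_modByMonic_lt f hpmonic
      have h2 : p.degree = 2 := by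
        rw [Polynomial.degree_eq_natDegree hpmonic.ne_zero, hpdeg]; rfl
      rw [h2] at h1
      exact Polynomial.natDegree_le_iff_degree_le.mpr (by
        exact Order.le_of_lt_succ (by exact_mod_cast h1))
    refine ⟨r.coeff 0, r.coeff 1, ?_⟩
    rw [← hmk]
    conv_lhs => rw [Polynomial.eq_X_add_C_of_natDegree_le_one hdeg]
    rw [map_add, map_mul, AdjoinRoot.mk_C, AdjoinRoot.mk_C, AdjoinRoot.mk_X]
    rw [hi, AdjoinRoot.algebraMap_eq, hβ]
    ring
  -- Frobenius facts in L
  obtain ⟨nn, hppp, hcard⟩ := FiniteField.card E (ringChar E)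
  rw [hE] at hcard
  have hqdvd : q ∣ ringChar E ^ (nn : ℕ) := hcard ▸ dvd_pow_self q (by omega)
  obtain ⟨k, hk, hq⟩ := (Nat.dvd_prime_pow hppp).mp hqdvd
  haveI : CharP L (ringChar E) := charP_of_injective_ringHom i.injective (ringChar E)
  haveI : Fact (Nat.Prime (ringChar E)) := ⟨hppp⟩
  set φ : L →+* L := iterateFrobenius L (ringChar E) k with hφ
  have hφdef : ∀ x : L, φ x = x ^ q := by
    intro x; rw [hφ, iterateFrobenius_def, ← hq]
  have hfix : ∀ x : L, x ^ q ^ 3 = x → x ∈ Set.range i :=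
    fun x hx => stmt4_aux_fix i hE (Nat.one_lt_pow (by norm_num) hq1) hx
  have hβ0 : β ≠ 0 := fun h => hβnotE ⟨0, by simp [h]⟩
  have hαfixL : (i αE) ^ q = i αE := by rw [← map_pow, hαq]
  have hβq : β ^ q = 1 - β := by
    have h1 : β ^ 2 - β - i αE = 0 := by linear_combination hβeq
    have h2 : (β ^ q) ^ 2 - β ^ q - i αE = 0 := by
      have h := congrArg φ h1
      rw [map_zero, map_sub, map_sub, map_pow, hφdef β, hφdef (i αE), hαfixL] at h
      exact h
    have h3 : (β ^ q - β) * (β ^ q - (1 - β)) = 0 := by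
      linear_combination h2 - h1
    rcases mul_eq_zero.mp h3 with h | h
    · exfalso
      apply hβnotE
      have hb : β ^ q = β := by linear_combination h
      apply hfix
      calc β ^ q ^ 3 = ((β ^ q) ^ q) ^ q := by rw [← pow_mul, ← pow_mul]; ring_nf
      _ = β := by rw [hb, hb, hb]
    · linear_combination h
  have hβq2 : β ^ q ^ 2 = β := by
    calc β ^ q ^ 2 = (β ^ q) ^ q := by rw [← pow_mul]; ring_nf
    _ = φ (1 - β) := by rw [hβq, hφdef]
    _ = 1 - β ^ q := by rw [map_sub, map_one, hφdef]
    _ = β := by rw [hβq]; ring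
  have h2β : (2 : L) * β - 1 ≠ 0 := by
    intro h
    rcases eq_or_ne (2 : L) 0 with h2 | h2
    · rw [h2, zero_mul] at h; simp at h
    · exact hβnotE ⟨(2 : E)⁻¹, by
        rw [map_inv₀, map_ofNat]
        apply inv_eq_of_mul_eq_one_right
        linear_combination h⟩
  -- trace and norm formulas
  obtain ⟨nF, hpppF, hcardF⟩ := FiniteField.card F (ringChar F)
  rw [hF] at hcardF
  haveI : CharP E (ringChar F) := charP_of_injective_ringHom (algebraMap F E).injective (ringChar F)
  haveI : Fact (Nat.Prime (ringChar F)) := ⟨hpppF⟩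
  have hφEdef : ∀ x : E, iterateFrobenius E (ringChar F) nF x = x ^ q := by
    intro x; rw [iterateFrobenius_def, ← hcardF]
  let σ : E →ₐ[F] E :=
    { toRingHom := iterateFrobenius E (ringChar F) (nF : ℕ)
      commutes' := fun a => by
        rw [RingHom.toMonoidHom_eq_coe, OneHom.toFun_eq_coe, MonoidHom.toOneHom_coe,
          MonoidHom.coe_coe, hφEdef, ← map_pow, ← hF, FiniteField.pow_card] }
  let ff : E ≃ₐ[F] E := AlgEquiv.ofBijective σ
    ((Finite.injective_iff_bijective).mp (σ : E →+* E).injective)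
  have hf : ∀ x : E, ff x = x ^ q := fun x => hφEdef x
  have hf2 : ∀ x : E, (ff * ff) x = x ^ q ^ 2 := by
    intro x
    rw [AlgEquiv.mul_apply, hf, hf, ← pow_mul, pow_two]
  have hq3 : q < q ^ 3 := by
    have := Nat.pow_lt_pow_right hq1 (show 1 < 3 by norm_num); simpa using this
  have hq23 : q ^ 2 < q ^ 3 := Nat.pow_lt_pow_right hq1 (show 2 < 3 by norm_num)
  have hfne1 : ff ≠ 1 := by
    obtain ⟨x, hx⟩ := stmt4_aux_ex hq1 (hE ▸ hq3)
    exact fun h => hx (by rw [← hf x, h, AlgEquiv.one_apply])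
  have hf2ne1 : ff * ff ≠ 1 := by
    obtain ⟨x, hx⟩ := stmt4_aux_ex (m := q ^ 2) (by nlinarith [hq1]) (hE ▸ hq23)
    exact fun h => hx (by rw [← hf2 x, h, AlgEquiv.one_apply])
  have hf2nef : ff * ff ≠ ff := fun h => hfne1 (mul_left_cancel (a := ff) (by rw [h, mul_one]))
  have huniv : (Finset.univ : Finset (E ≃ₐ[F] E)) = {1, ff, ff * ff} := by
    symm
    apply Finset.eq_univ_of_card
    rw [← Nat.card_eq_fintype_card, IsGalois.card_aut_eq_finrank, hrank]
    rw [Finset.card_insert_of_notMem (by simp [hfne1.symm, hf2ne1.symm]),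
      Finset.card_insert_of_notMem (by simp [hf2nef.symm]), Finset.card_singleton]
  have htr : ∀ x : E, algebraMap F E (Algebra.trace F E x) = x + x ^ q + x ^ q ^ 2 := by
    intro x
    rw [trace_eq_sum_automorphisms, huniv]
    rw [Finset.sum_insert (by simp [hfne1.symm, hf2ne1.symm]),
      Finset.sum_insert (by simp [hf2nef.symm]), Finset.sum_singleton]
    rw [AlgEquiv.one_apply, hf, hf2]
    ring
  have hnm : ∀ x : E, algebraMap F E (Algebra.norm F x) = x * x ^ q * x ^ q ^ 2 := by
    intro x
    rw [Algebra.norm_eq_prod_automorphisms, huniv]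
    rw [Finset.prod_insert (by simp [hfne1.symm, hf2ne1.symm]),
      Finset.prod_insert (by simp [hf2nef.symm]), Finset.prod_singleton]
    rw [AlgEquiv.one_apply, hf, hf2]
    ring
  have hd3 : ∀ d : E, d ^ q ^ 3 = d := by
    intro d; rw [← hE]; exact FiniteField.pow_card d
  -- the condition, reformulated in E
  have hcondE : ∀ d : E,
      (Algebra.norm F d - Algebra.trace F E (d ^ (q ^ 2 + q)) * α - α ^ 2 = 0)
      ↔ (d * d ^ q * d ^ q ^ 2
          - αE * (d ^ q ^ 2 * d ^ q + d * d ^ q ^ 2 + d * d ^ q) - αE ^ 2 = 0) := by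
    intro d
    have hmap : algebraMap F E (Algebra.norm F d - Algebra.trace F E (d ^ (q ^ 2 + q)) * α
        - α ^ 2) = d * d ^ q * d ^ q ^ 2
          - αE * (d ^ q ^ 2 * d ^ q + d * d ^ q ^ 2 + d * d ^ q) - αE ^ 2 := by
      rw [map_sub, map_sub, map_mul, map_pow (algebraMap F E) α 2, hnm d, htr (d ^ (q ^ 2 + q)), ← hαE]
      have hy0 : d ^ (q ^ 2 + q) = d ^ q ^ 2 * d ^ q := by rw [pow_add]
      have hy1 : (d ^ (q ^ 2 + q)) ^ q = d * d ^ q ^ 2 := by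
        calc (d ^ (q ^ 2 + q)) ^ q = d ^ ((q ^ 2 + q) * q) := (pow_mul d _ q).symm
        _ = d ^ q ^ 3 * d ^ q ^ 2 := by
            rw [show (q ^ 2 + q) * q = q ^ 3 + q ^ 2 by ring, pow_add]
        _ = d * d ^ q ^ 2 := by rw [hd3 d]
      have hy2 : (d ^ (q ^ 2 + q)) ^ q ^ 2 = d ^ q * d := by
        calc (d ^ (q ^ 2 + q)) ^ q ^ 2 = d ^ ((q ^ 2 + q) * q ^ 2) := (pow_mul d _ _).symm
        _ = (d ^ q ^ 3) ^ q * d ^ q ^ 3 := by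
            rw [show (q ^ 2 + q) * q ^ 2 = q ^ 3 * q + q ^ 3 by ring, pow_add, pow_mul]
        _ = d ^ q * d := by rw [hd3 d]
      rw [hy1, hy2, hy0]
      ring
    constructor
    · intro h
      rw [← hmap, h, map_zero]
    · intro h
      rw [← hmap] at h
      exact (_root_.map_eq_zero (algebraMap F E)).mp h
  -- the condition as a power condition in L
  set n : ℕ := (q ^ 4 + q ^ 2 + 1) * (q - 1) with hn
  set c : L := β ^ (2 * (q - 1)) with hc
  have hiff : ∀ d : E,
      (Algebra.norm F d - Algebra.trace F E (d ^ (q ^ 2 + q)) * α - α ^ 2 = 0)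
      ↔ (β + i d) ^ n = c := by
    intro d
    rw [hcondE d]
    constructor
    · intro h
      exact (stmt4_aux_key hq1 αE β hβeq hβnotE hβq hβq2 φ hφdef d (hd3 d)).mp
        (by rw [← hi, h, map_zero])
    · intro h
      have := (stmt4_aux_key hq1 αE β hβeq hβnotE hβq hβq2 φ hφdef d (hd3 d)).mpr h
      rw [← hi] at this
      exact (_root_.map_eq_zero i).mp this
  -- counting
  have hq0 : 1 ≤ q := by omega
  have hc0 : c ≠ 0 := pow_ne_zero _ hβ0
  have hcne1 : c ≠ 1 := by
    intro h
    have hb2q : (1 - β) ^ 2 = c * β ^ 2 := by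
      rw [hc, ← pow_add, show 2 * (q - 1) + 2 = q * 2 by omega, pow_mul, hβq]
    rw [h, one_mul] at hb2q
    exact h2β (by linear_combination -hb2q)
  have hn0 : 0 < n := by
    rw [hn]
    exact Nat.mul_pos (by positivity) (by omega)
  have htE1 : ∀ e : E, e ≠ 0 → e ^ n = 1 := by
    intro e he
    have h1 : e ^ (q ^ 3 - 1) = 1 := by
      rw [← hE]; exact FiniteField.pow_card_sub_one_eq_one e he
    have hneq : n = (q ^ 3 - 1) * (q ^ 2 - q + 1) := by
      rw [hn]
      zify [show 1 ≤ q by omega, Nat.one_le_pow 3 q (by omega), show q ≤ q ^ 2 by nlinarith [hq1]]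
      ring
    rw [hneq, pow_mul, h1, one_pow]
  have key : Nat.card {x : L // x ^ n = c}
      = Nat.card Eˣ * Nat.card {d : E //
        Algebra.norm F d - Algebra.trace F E (d ^ (q ^ 2 + q)) * α - α ^ 2 = 0} := by
    rw [← Nat.card_prod]
    apply (Nat.card_congr _).symm
    apply Equiv.ofBijective (f := fun td : Eˣ × {d : E //
        Algebra.norm F d - Algebra.trace F E (d ^ (q ^ 2 + q)) * α - α ^ 2 = 0} =>
      (⟨i td.1 * (β + i td.2.1), by
        rw [mul_pow, ← map_pow, htE1 td.1.1 td.1.ne_zero, map_one, one_mul]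
        exact (hiff td.2.1).mp td.2.2⟩ : {x : L // x ^ n = c}))
    constructor
    · rintro ⟨t, d⟩ ⟨t', d'⟩ hdd
      have heq : i t.1 * (β + i d.1) = i t'.1 * (β + i d'.1) := congrArg Subtype.val hdd
      have htt : t.1 = t'.1 := by
        by_contra htne
        apply hβnotE
        refine ⟨(t'.1 * d'.1 - t.1 * d.1) / (t.1 - t'.1), ?_⟩
        rw [map_div₀, map_sub, map_sub, map_mul, map_mul]
        rw [div_eq_iff (by
          rw [sub_ne_zero]
          exact fun hcc => htne (i.injective hcc))]
        linear_combination -heq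
      rw [htt] at heq
      have hd : (β + i d.1) = (β + i d'.1) :=
        mul_left_cancel₀ (by
          simpa using (map_ne_zero i).mpr t'.ne_zero) heq
      have : d.1 = d'.1 := i.injective (by linear_combination hd)
      exact Prod.ext (Units.ext htt) (Subtype.ext this)
    · rintro ⟨z, hz⟩
      obtain ⟨a, b, hab⟩ := hrepr z
      have hb : b ≠ 0 := by
        rintro rfl
        rw [map_zero, zero_mul, add_zero] at hab
        have ha : a ≠ 0 := by
          rintro rfl
          rw [map_zero] at hab
          rw [hab, zero_pow hn0.ne'] at hz
          exact hc0 hz.symm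
        rw [hab, ← map_pow, htE1 a ha, map_one] at hz
        exact hcne1 hz.symm
      have hzz : z = i b * (β + i (b⁻¹ * a)) := by
        rw [hab, mul_add, ← map_mul, show b * (b⁻¹ * a) = a from by field_simp]
        ring
      have hpowb : (β + i (b⁻¹ * a)) ^ n = c := by
        have h1 : (i b) ^ n * (β + i (b⁻¹ * a)) ^ n = c := by
          rw [← mul_pow, ← hzz, hz]
        rw [← map_pow, htE1 b hb, map_one, one_mul] at h1
        exact h1
      exact ⟨(Units.mk0 b hb, ⟨b⁻¹ * a, (hiff _).mpr hpowb⟩), Subtype.ext hzz.symm⟩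
  have hcount : Nat.card {x : L // x ^ n = c} = n := by
    apply stmt4_aux_count hn0 (show 0 < q + 1 by omega) _ c hc0
    · rw [hc, ← pow_mul, show 2 * (q - 1) * (q + 1) = (q ^ 2 - 1) * 2 by
        zify [show 1 ≤ q by omega, Nat.one_le_pow 2 q (by omega)]; ring]
      rw [pow_mul]
      have hb1 : β ^ (q ^ 2 - 1) = 1 := by
        have h1 : β ^ (q ^ 2 - 1) * β = 1 * β := by
          rw [← pow_succ, show q ^ 2 - 1 + 1 = q ^ 2 by
            have := Nat.one_le_pow 2 q (by omega); omega, hβq2, one_mul]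
        exact mul_right_cancel₀ hβ0 h1
      rw [hb1, one_pow]
    · rw [hcardL, hn]
      zify [show 1 ≤ q by omega, Nat.one_le_pow 6 q (by omega)]
      ring
  rw [key] at hcount
  have hEu : Nat.card Eˣ = q ^ 3 - 1 := by
    rw [Nat.card_eq_fintype_card, Fintype.card_units, hE]
  rw [hEu] at hcount
  have hneq : n = (q ^ 3 - 1) * (q ^ 2 - q + 1) := by
    rw [hn]
    zify [show 1 ≤ q by omega, Nat.one_le_pow 3 q (by omega), show q ≤ q ^ 2 by nlinarith [hq1]]
    ring
  rw [hneq] at hcount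
  have h31 : 0 < q ^ 3 - 1 := by
    have := Nat.one_lt_pow (n := 3) (by norm_num) hq1
    omega
  exact Nat.eq_of_mul_eq_mul_left h31 hcount
end

section
/- Let q be a prime power, F_{q^3} the cubic extension of F_q, and α in F_q with x^2 - x - α irreducible over F_q. For any d in F_{q^3}, writing x = Tr(d) + Tr(d^{q^2+q}) + 1 + α and y = N(d) - Tr(d^{q^2+q})α - α^2, the identity N(d + d^2 - α) = (y + αx)^2 + xy holds. -/
/-- With `x = Tr(d) + Tr(d^{q^2+q}) + 1 + α` and `y = N(d) - Tr(d^{q^2+q})α - α^2`, the identity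
`N(d + d^2 - α) = (y + αx)^2 + xy` holds for all `d ∈ F_{q^3}`. -/
theorem stmt5 (F E : Type*) [Field F] [Field E] [Fintype F] [Fintype E] [Algebra F E]
    (q : ℕ) (hF : Fintype.card F = q) (hE : Fintype.card E = q ^ 3)
    (α : F) (hα : Irreducible (Polynomial.X ^ 2 - Polynomial.X - Polynomial.C α))
    (d : E) :
    Algebra.norm F (d + d ^ 2 - algebraMap F E α) =
      (Algebra.norm F d - Algebra.trace F E (d ^ (q ^ 2 + q)) * α - α ^ 2 +
          α * (Algebra.trace F E d + Algebra.trace F E (d ^ (q ^ 2 + q)) + 1 + α)) ^ 2 +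
        (Algebra.trace F E d + Algebra.trace F E (d ^ (q ^ 2 + q)) + 1 + α) *
          (Algebra.norm F d - Algebra.trace F E (d ^ (q ^ 2 + q)) * α - α ^ 2) := by
  classical
  have hq1 : 1 < q := hF ▸ Fintype.one_lt_card
  obtain ⟨p, hchar⟩ := CharP.exists F
  haveI : CharP F p := hchar
  haveI hpp : Fact p.Prime := ⟨CharP.char_is_prime F p⟩
  haveI : CharP E p := charP_of_injective_algebraMap' F p
  obtain ⟨n, hn⟩ := FiniteField.card F p
  rw [hF] at hn
  -- Frobenius as an F-algebra automorphism of E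
  have hEq : ∀ x : E, x ^ q = iterateFrobenius E p n x := by
    intro x; rw [iterateFrobenius_def, ← hn.2]
  have hFq : ∀ a : F, a ^ q = a := fun a => hF ▸ FiniteField.pow_card a
  let φ : E →ₐ[F] E :=
    { toRingHom := iterateFrobenius E p n
      commutes' := fun a => by
        show (algebraMap F E a) ^ p ^ (n:ℕ) = algebraMap F E a
        rw [← hn.2, ← map_pow, hFq] }
  have hφbij : Function.Bijective φ := by
    have : Function.Injective φ := φ.toRingHom.injective
    exact (Finite.injective_iff_bijective).mp this
  let σ : E ≃ₐ[F] E := AlgEquiv.ofBijective φ hφbij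
  have hσ : ∀ x : E, σ x = x ^ q := fun x => (hEq x).symm
  have hE3 : ∀ x : E, x ^ q ^ 3 = x := fun x => hE ▸ FiniteField.pow_card x
  -- σ ≠ 1
  have hσne : σ ≠ 1 := by
    intro h
    have hall : ∀ x : E, x ^ q = x := fun x => by
      rw [← hσ, h]; rfl
    have hne : (Polynomial.X ^ q - Polynomial.X : Polynomial E) ≠ 0 :=
      FiniteField.X_pow_card_sub_X_ne_zero E hq1
    have hsub : (Finset.univ : Finset E) ⊆
        (Polynomial.X ^ q - Polynomial.X : Polynomial E).roots.toFinset := by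
      intro x _
      rw [Multiset.mem_toFinset, Polynomial.mem_roots hne]
      simp [Polynomial.IsRoot, hall x]
    have h1 : Fintype.card E ≤ Multiset.card
        (Polynomial.X ^ q - Polynomial.X : Polynomial E).roots := by
      calc Fintype.card E = (Finset.univ : Finset E).card := rfl
        _ ≤ (Polynomial.X ^ q - Polynomial.X : Polynomial E).roots.toFinset.card :=
            Finset.card_le_card hsub
        _ ≤ _ := Multiset.toFinset_card_le _
    have h2 := (Polynomial.card_roots' (Polynomial.X ^ q - Polynomial.X : Polynomial E))
    rw [FiniteField.X_pow_card_sub_X_natDegree_eq E hq1] at h2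
    have : q ^ 3 ≤ q := hE ▸ le_trans h1 h2
    have : q < q ^ 3 := by
      calc q = q ^ 1 := (pow_one q).symm
        _ < q ^ 3 := Nat.pow_lt_pow_right hq1 (by norm_num)
    omega
  -- σ ^ 3 = 1
  have hσ3 : σ ^ 3 = 1 := by
    ext x
    show σ (σ (σ x)) = x
    rw [hσ, hσ, hσ, ← pow_mul, ← pow_mul]
    have : q * (q * q) = q ^ 3 := by ring
    rw [this, hE3]
  haveI : FiniteDimensional F E := by infer_instance
  -- finrank = 3
  have hfr : Module.finrank F E = 3 := by
    have h := Module.card_eq_pow_finrank (K := F) (V := E)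
    rw [hF, hE] at h
    exact (Nat.pow_right_injective hq1 h.symm)
  have hcard : Fintype.card (E ≃ₐ[F] E) = 3 := by
    rw [← Nat.card_eq_fintype_card, IsGalois.card_aut_eq_finrank, hfr]
  have hσ2ne : σ ^ 2 ≠ 1 := fun h => hσne (by rw [← hσ3, pow_succ, h, one_mul])
  have hs12 : σ ≠ σ ^ 2 := fun h =>
    hσne (mul_left_cancel (a := σ) (by rw [mul_one, ← pow_two]; exact h)).symm
  have hsetcard : ({1, σ, σ ^ 2} : Finset (E ≃ₐ[F] E)).card = 3 := by
    rw [Finset.card_insert_of_notMem (by simp [Ne, eq_comm, hσne.symm, hσ2ne.symm]),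
      Finset.card_insert_of_notMem (by simp [hs12]), Finset.card_singleton]
  have huniv : (Finset.univ : Finset (E ≃ₐ[F] E)) = {1, σ, σ ^ 2} := by
    symm
    apply Finset.eq_univ_of_card
    rw [hsetcard, ← hcard, Fintype.card]
  have hnotmem1 : (1 : E ≃ₐ[F] E) ∉ ({σ, σ ^ 2} : Finset (E ≃ₐ[F] E)) := by
    simp [Ne, eq_comm, hσne.symm, hσ2ne.symm]
  have hnotmem2 : σ ∉ ({σ ^ 2} : Finset (E ≃ₐ[F] E)) := by simp [hs12]
  have hsum : ∀ x : E, (∑ τ : E ≃ₐ[F] E, τ x) = x + x ^ q + (x ^ q) ^ q := by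
    intro x
    rw [huniv, Finset.sum_insert hnotmem1, Finset.sum_insert hnotmem2,
      Finset.sum_singleton]
    simp only [pow_two, AlgEquiv.mul_apply, AlgEquiv.one_apply, hσ]
    ring
  have hprod : ∀ x : E, (∏ τ : E ≃ₐ[F] E, τ x) = x * (x ^ q * (x ^ q) ^ q) := by
    intro x
    rw [huniv, Finset.prod_insert hnotmem1, Finset.prod_insert hnotmem2,
      Finset.prod_singleton]
    simp only [pow_two, AlgEquiv.mul_apply, AlgEquiv.one_apply, hσ]
  -- explicit trace/norm formulas
  have hcq : ((d ^ q) ^ q) ^ q = d := by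
    rw [← pow_mul, ← pow_mul]
    have : q * (q * q) = q ^ 3 := by ring
    rw [this, hE3]
  have hTd : algebraMap F E (Algebra.trace F E d) = d + d ^ q + (d ^ q) ^ q := by
    rw [trace_eq_sum_automorphisms, hsum]
  have hNd : algebraMap F E (Algebra.norm F d) = d * (d ^ q * (d ^ q) ^ q) := by
    rw [Algebra.norm_eq_prod_automorphisms, hprod]
  have hT2 : algebraMap F E (Algebra.trace F E (d ^ (q ^ 2 + q))) =
      d ^ q * (d ^ q) ^ q + ((d ^ q) ^ q * d + d * d ^ q) := by
    rw [trace_eq_sum_automorphisms, hsum]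
    have e1 : d ^ (q ^ 2 + q) = d ^ q * (d ^ q) ^ q := by
      rw [← pow_mul, ← pow_add]; ring_nf
    have e2 : (d ^ (q ^ 2 + q)) ^ q = (d ^ q) ^ q * d := by
      rw [e1, mul_pow, hcq]
    have e3 : ((d ^ (q ^ 2 + q)) ^ q) ^ q = d * d ^ q := by
      rw [e2, mul_pow, hcq]
    rw [e3, e2, e1]; ring
  have hAq : (algebraMap F E α) ^ q = algebraMap F E α := by rw [← map_pow, hFq]
  have hNbig : algebraMap F E (Algebra.norm F (d + d ^ 2 - algebraMap F E α)) =
      (d + d ^ 2 - algebraMap F E α) *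
        ((d ^ q + (d ^ q) ^ 2 - algebraMap F E α) *
          ((d ^ q) ^ q + ((d ^ q) ^ q) ^ 2 - algebraMap F E α)) := by
    rw [Algebra.norm_eq_prod_automorphisms, hprod]
    have hhom : ∀ x y : E, (x + y) ^ q = x ^ q + y ^ q := by
      intro x y
      rw [hEq, hEq, hEq, map_add]
    have hhs : ∀ x y : E, (x - y) ^ q = x ^ q - y ^ q := by
      intro x y
      rw [hEq, hEq, hEq, map_sub]
    have e1 : (d + d ^ 2 - algebraMap F E α) ^ q =
        d ^ q + (d ^ q) ^ 2 - algebraMap F E α := by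
      rw [hhs, hhom, hAq, ← pow_mul, ← pow_mul]; ring_nf
    have e2 : ((d + d ^ 2 - algebraMap F E α) ^ q) ^ q =
        (d ^ q) ^ q + ((d ^ q) ^ q) ^ 2 - algebraMap F E α := by
      rw [e1, hhs, hhom, hAq, ← pow_mul, ← pow_mul, ← pow_mul]; ring_nf
    rw [e2, e1]
  -- conclude by injectivity of algebraMap
  apply (algebraMap F E).injective
  rw [hNbig]
  simp only [map_add, map_sub, map_mul, map_pow, map_one]
  rw [hTd, hNd, hT2]
  ring
end

section
/- Let q be a prime power, F_{q^3} the cubic extension of F_q, and α in F_q. For any d in F_{q^3} with Tr(d) + Tr(d^{q^2+q}) + 1 + α = 0, one has N(d) + Tr(d)·α + α = -N(1 + d + d^q). -/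
/-- For `α ∈ F_q` and `d ∈ F_{q^3}` with `Tr(d) + Tr(d^{q^2+q}) + 1 + α = 0`, one has
`N(d) + Tr(d)·α + α = -N(1 + d + d^q)`. -/
theorem stmt7 (F E : Type*) [Field F] [Field E] [Fintype F] [Fintype E] [Algebra F E]
    (q : ℕ) (hF : Fintype.card F = q) (hE : Fintype.card E = q ^ 3)
    (α : F) (d : E)
    (hd : Algebra.trace F E d + Algebra.trace F E (d ^ (q ^ 2 + q)) + 1 + α = 0) :
    Algebra.norm F d + Algebra.trace F E d * α + α = -Algebra.norm F (1 + d + d ^ q) := by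
  classical
  have hq2 : 2 ≤ q := hF ▸ Fintype.one_lt_card
  -- characteristic
  obtain ⟨p, hp⟩ := CharP.exists F
  haveI : CharP F p := hp
  obtain ⟨n, hpp, hcard⟩ := FiniteField.card F p
  haveI : Fact p.Prime := ⟨hpp⟩
  haveI : CharP E p := charP_of_injective_algebraMap' (A := E) F p
  have hq : q = p ^ (n : ℕ) := hF ▸ hcard
  -- finrank is 3
  have hrank : Module.finrank F E = 3 := by
    have h := Module.card_eq_pow_finrank (K := F) (V := E)
    rw [hF, hE] at h
    exact (Nat.pow_right_injective hq2 h.symm)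
  -- the relative Frobenius as an algebra equivalence
  let φ₀ : E →ₐ[F] E :=
    { iterateFrobenius E p n with
      commutes' := fun a => by
        show (algebraMap F E a) ^ p ^ (n : ℕ) = algebraMap F E a
        rw [← map_pow, ← hq, ← hF, FiniteField.pow_card] }
  have hbij : Function.Bijective φ₀ :=
    (Finite.injective_iff_bijective).mp φ₀.toRingHom.injective
  let φ : E ≃ₐ[F] E := AlgEquiv.ofBijective φ₀ hbij
  have hφ : ∀ x : E, φ x = x ^ q := fun x => by
    show iterateFrobenius E p n x = x ^ q
    rw [iterateFrobenius_def, hq]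
  -- no small power of q fixes everything
  have hne : ∀ m : ℕ, 0 < m → m < 3 → ¬ (∀ x : E, x ^ q ^ m = x) := by
    intro m hm1 hm3 hall
    set f : Polynomial E := Polynomial.X ^ q ^ m - Polynomial.X with hf
    have hfz : f = 0 := by
      apply Polynomial.eq_zero_of_natDegree_lt_card_of_eval_eq_zero' f Finset.univ
      · intro i _
        simp [hf, hall i]
      · have hdeg : f.natDegree ≤ q ^ m := by
          refine le_trans (Polynomial.natDegree_sub_le _ _) ?_
          simp only [Polynomial.natDegree_X_pow, Polynomial.natDegree_X]
          exact max_le le_rfl (Nat.one_le_pow m q (by omega))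
        calc f.natDegree ≤ q ^ m := hdeg
          _ < q ^ 3 := Nat.pow_lt_pow_right (by omega) hm3
          _ = Fintype.card E := hE.symm
          _ = Finset.univ.card := (Finset.card_univ).symm
    have hc : f.coeff (q ^ m) = 1 := by
      have h1 : (1 : ℕ) < q ^ m := lt_of_lt_of_le hq2 (Nat.le_self_pow hm1.ne' q)
      simp [hf, Polynomial.coeff_X_pow, Polynomial.coeff_X, h1.ne]
    rw [hfz] at hc
    simp at hc
  -- distinctness of 1, φ, φ*φ
  have hφ1 : φ ≠ 1 := by
    intro h
    refine hne 1 one_pos (by norm_num) (fun x => ?_)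
    have := congrArg (fun σ : E ≃ₐ[F] E => σ x) h
    simpa [hφ, pow_one] using this
  have hφ2 : φ * φ ≠ 1 := by
    intro h
    refine hne 2 two_pos (by norm_num) (fun x => ?_)
    have := congrArg (fun σ : E ≃ₐ[F] E => σ x) h
    simp only [AlgEquiv.mul_apply, AlgEquiv.one_apply] at this
    rwa [hφ, hφ, ← pow_mul, ← pow_two] at this
  have hφ12 : φ ≠ φ * φ := by
    intro h
    have : (1 : E ≃ₐ[F] E) = φ := mul_left_cancel (a := φ) (by simpa using h)
    exact hφ1 this.symm
  have h1mem : (1 : E ≃ₐ[F] E) ∉ ({φ, φ * φ} : Finset (E ≃ₐ[F] E)) := by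
    simp only [Finset.mem_insert, Finset.mem_singleton]
    push_neg
    exact ⟨Ne.symm hφ1, Ne.symm hφ2⟩
  have hφmem : φ ∉ ({φ * φ} : Finset (E ≃ₐ[F] E)) := by
    simpa using hφ12
  have huniv : (Finset.univ : Finset (E ≃ₐ[F] E)) = {1, φ, φ * φ} := by
    symm
    apply Finset.eq_univ_of_card
    rw [Finset.card_insert_of_notMem h1mem, Finset.card_insert_of_notMem hφmem,
      Finset.card_singleton, ← Nat.card_eq_fintype_card, IsGalois.card_aut_eq_finrank, hrank]
  -- trace and norm formulas
  have htr : ∀ x : E, algebraMap F E (Algebra.trace F E x) = x + x ^ q + (x ^ q) ^ q := by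
    intro x
    rw [trace_eq_sum_automorphisms, huniv,
      Finset.sum_insert h1mem, Finset.sum_insert hφmem, Finset.sum_singleton]
    simp only [hφ, AlgEquiv.mul_apply, AlgEquiv.one_apply]
    ring
  have hnorm : ∀ x : E, algebraMap F E (Algebra.norm F x) = x * x ^ q * (x ^ q) ^ q := by
    intro x
    rw [Algebra.norm_eq_prod_automorphisms, huniv,
      Finset.prod_insert h1mem, Finset.prod_insert hφmem, Finset.prod_singleton]
    simp only [hφ, AlgEquiv.mul_apply, AlgEquiv.one_apply]
    ring
  -- basic Frobenius facts
  have h3 : ((d ^ q) ^ q) ^ q = d := by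
    rw [← pow_mul, ← pow_mul, show q * (q * q) = q ^ 3 by ring]
    have h := FiniteField.pow_card d
    rwa [hE] at h
  have hadd : ∀ x y : E, (x + y) ^ q = x ^ q + y ^ q := fun x y => by
    rw [← hφ, ← hφ, ← hφ, map_add]
  have hsplit : d ^ (q ^ 2 + q) = (d ^ q) ^ q * d ^ q := by
    rw [pow_add, ← pow_mul, ← pow_two]
  have hA : (1 + d + d ^ q) ^ q = 1 + d ^ q + (d ^ q) ^ q := by
    rw [hadd, hadd, one_pow]
  have hB : ((1 + d + d ^ q) ^ q) ^ q = 1 + (d ^ q) ^ q + d := by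
    rw [hA, hadd, hadd, one_pow, h3]
  have hC : (d ^ (q ^ 2 + q)) ^ q = d * (d ^ q) ^ q := by
    rw [hsplit, mul_pow, h3]
  have hD : ((d ^ (q ^ 2 + q)) ^ q) ^ q = d ^ q * d := by
    rw [hC, mul_pow, h3]
  -- map the hypothesis into E
  have hdE := congrArg (algebraMap F E) hd
  rw [map_add, map_add, map_add, map_one, map_zero, htr, htr, hD, hC, hsplit] at hdE
  -- map the goal into E
  apply (algebraMap F E).injective
  rw [map_add, map_add, map_mul, map_neg, htr, hnorm, hnorm, hB, hA]
  set A := algebraMap F E α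
  linear_combination (d + d ^ q + (d ^ q) ^ q + 1) * hdE
end

section
/- Let q be a prime power and O as above. Then the hyperplane ⟨(0,0,1,0)⟩^⊥ meets O in exactly q^2 + 1 points, and the hyperplane ⟨(1,0,0,1)⟩^⊥ meets O in exactly q^2 + q + 1 points. -/
/-- In a finite field, the number of solutions of `x ^ n = 1` is `n`, provided
`n` is a positive divisor of `card E - 1`. -/
lemma aux_card_pow_eq_one (E : Type*) [Field E] [Fintype E] {n : ℕ} (hn : 0 < n)
    (hd : n ∣ Fintype.card E - 1) :
    Nat.card {x : E // x ^ n = 1} = n := by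
  obtain ⟨g, hg⟩ := IsCyclic.exists_ofOrder_eq_natCard (α := Eˣ)
  rw [Nat.card_units, Nat.card_eq_fintype_card] at hg
  obtain ⟨m, hm⟩ := hd
  have hcard : 0 < Fintype.card E - 1 := by
    have := Fintype.one_lt_card (α := E)
    omega
  have hm0 : 0 < m := by
    rcases Nat.eq_zero_or_pos m with h | h
    · simp [h] at hm; omega
    · exact h
  have horder : orderOf (g ^ m) = n := by
    rw [orderOf_pow, hg, hm, Nat.gcd_eq_right ⟨n, by ring⟩, Nat.mul_div_cancel _ hm0]
  have hζ : IsPrimitiveRoot ((g ^ m : Eˣ) : E) n := by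
    have := IsPrimitiveRoot.orderOf ((g ^ m : Eˣ) : E)
    rwa [orderOf_units, horder] at this
  have e : {x : E // x ^ n = 1} ≃ {x : E // x ∈ Polynomial.nthRootsFinset n (1 : E)} :=
    Equiv.subtypeEquivRight fun x => (Polynomial.mem_nthRootsFinset hn (1 : E)).symm
  rw [Nat.card_congr e, Nat.card_eq_fintype_card, Fintype.card_coe,
    hζ.card_nthRootsFinset]

/-- For a cubic extension of finite fields, the norm is `x ↦ x ^ (1 + q + q²)`. -/
lemma aux_norm_eq_pow (F E : Type*) [Field F] [Field E] [Fintype F] [Fintype E] [Algebra F E]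
    (q : ℕ) (hF : Fintype.card F = q) (hE : Fintype.card E = q ^ 3) (x : E) :
    algebraMap F E (Algebra.norm F x) = x ^ (1 + q + q ^ 2) := by
  classical
  have hq2 : 2 ≤ q := hF ▸ Fintype.one_lt_card
  -- the characteristic
  set p := ringChar F with hp
  haveI : CharP F p := ringChar.charP F
  haveI hfact : Fact p.Prime := ⟨CharP.char_is_prime F p⟩
  haveI : CharP E p := charP_of_injective_algebraMap (algebraMap F E).injective p
  obtain ⟨n, -, hqn⟩ := FiniteField.card F p
  rw [hF] at hqn
  -- the finrank is 3
  have hrank : Module.finrank F E = 3 := by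
    have h := Module.card_eq_pow_finrank (K := F) (V := E)
    rw [hF, hE] at h
    exact (Nat.pow_right_injective hq2 h.symm)
  -- the relative Frobenius
  have hcomm : ∀ c : F, (iterateFrobenius E p n) (algebraMap F E c) = algebraMap F E c := by
    intro c
    rw [iterateFrobenius_def, ← hqn, ← map_pow]
    congr 1
    rw [← hF]
    exact FiniteField.pow_card c
  let φ₀ : E →ₐ[F] E := { toRingHom := iterateFrobenius E p n, commutes' := hcomm }
  have hbij : Function.Bijective φ₀ :=
    Finite.injective_iff_bijective.mp φ₀.toRingHom.injective
  let φ : E ≃ₐ[F] E := AlgEquiv.ofBijective φ₀ hbij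
  have hφ : ∀ y : E, φ y = y ^ q := by
    intro y
    show (iterateFrobenius E p n) y = y ^ q
    rw [iterateFrobenius_def, hqn]
  -- a generator of the unit group
  obtain ⟨g, hg⟩ := IsCyclic.exists_ofOrder_eq_natCard (α := Eˣ)
  rw [Nat.card_units, Nat.card_eq_fintype_card, hE] at hg
  -- arithmetic facts
  have h2q : 2 * q ≤ q * q := Nat.mul_le_mul hq2 (le_refl q)
  have h2qq : 2 * (q * q) ≤ q * (q * q) := Nat.mul_le_mul hq2 (le_refl (q * q))
  have hc : q ^ 3 = q * (q * q) := by ring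
  have hlt1 : q < q ^ 3 := by linarith
  have hlt2 : q * q < q ^ 3 := by linarith
  have hgk : ∀ k : ℕ, 0 < k → (g : E) ^ k = (g : E) → q ^ 3 - 1 ∣ k - 1 := by
    intro k hk h
    have h1 : (g : Eˣ) ^ k = g := Units.ext (by rw [Units.val_pow_eq_pow_val]; exact h)
    have h2 : (g : Eˣ) ^ (k - 1) = 1 := by
      have hk' : k - 1 + 1 = k := by omega
      have h3 : g ^ (k - 1) * g = g := by rw [← pow_succ, hk', h1]
      have h4 : g ^ (k - 1) * g = 1 * g := by rw [h3, one_mul]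
      exact mul_right_cancel h4
    have := orderOf_dvd_of_pow_eq_one h2
    rwa [hg] at this
  -- the three distinct automorphisms
  have hφ1 : φ ≠ 1 := by
    intro h
    have h1 : (g : E) ^ q = (g : E) := by
      have := congrArg (fun ψ : E ≃ₐ[F] E => ψ (g : E)) h
      simpa [hφ] using this
    have hq3pos : 0 < q ^ 3 := lt_trans (by omega : (0:ℕ) < q) hlt1
    have hle := Nat.le_of_dvd (by omega) (hgk q (by omega) h1)
    have e1 : q ^ 3 - 1 + 1 = q ^ 3 := Nat.succ_pred_eq_of_pos hq3pos
    have e2 : q - 1 + 1 = q := Nat.succ_pred_eq_of_pos (by omega)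
    have h5 : q ^ 3 ≤ q := by
      calc q ^ 3 = q ^ 3 - 1 + 1 := e1.symm
        _ ≤ q - 1 + 1 := Nat.add_le_add_right hle 1
        _ = q := e2
    exact absurd h5 (not_le.mpr hlt1)
  have hφ2 : φ * φ ≠ 1 := by
    intro h
    have h1 : (g : E) ^ (q * q) = (g : E) := by
      have := congrArg (fun ψ : E ≃ₐ[F] E => ψ (g : E)) h
      simpa [hφ, ← pow_mul] using this
    have hqqpos : 0 < q * q := lt_of_lt_of_le (by omega : (0:ℕ) < 2 * q) h2q
    have hq3pos : 0 < q ^ 3 := lt_trans hqqpos hlt2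
    have hle := Nat.le_of_dvd (Nat.sub_pos_of_lt (by omega)) (hgk (q * q) hqqpos h1)
    have e1 : q ^ 3 - 1 + 1 = q ^ 3 := Nat.succ_pred_eq_of_pos hq3pos
    have e2 : q * q - 1 + 1 = q * q := Nat.succ_pred_eq_of_pos hqqpos
    have h5 : q ^ 3 ≤ q * q := by
      calc q ^ 3 = q ^ 3 - 1 + 1 := e1.symm
        _ ≤ q * q - 1 + 1 := Nat.add_le_add_right hle 1
        _ = q * q := e2
    exact absurd h5 (not_le.mpr hlt2)
  have hφ3 : φ ≠ φ * φ := by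
    intro h
    apply hφ1
    have h2 : φ * 1 = φ * φ := by rw [mul_one]; exact h
    exact (mul_left_cancel h2).symm
  -- the Galois group is {1, φ, φ²}
  have hcardaut : Fintype.card (E ≃ₐ[F] E) = 3 := by
    rw [← Nat.card_eq_fintype_card, IsGalois.card_aut_eq_finrank, hrank]
  have hS : ({1, φ, φ * φ} : Finset (E ≃ₐ[F] E)) = Finset.univ := by
    apply Finset.eq_of_subset_of_card_le (Finset.subset_univ _)
    rw [Finset.card_univ, hcardaut]
    rw [Finset.card_insert_of_notMem (by simp [hφ1.symm, hφ2.symm]),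
      Finset.card_insert_of_notMem (by simp [hφ3]), Finset.card_singleton]
  -- compute the norm
  rw [Algebra.norm_eq_prod_automorphisms, ← hS]
  rw [Finset.prod_insert (by simp [hφ1.symm, hφ2.symm]),
    Finset.prod_insert (by simp [hφ3]), Finset.prod_singleton]
  have hφφ : (φ * φ) x = x ^ (q ^ 2) := by
    show φ (φ x) = _
    rw [hφ, hφ, ← pow_mul, sq]
  rw [AlgEquiv.one_apply, hφ, hφφ]
  rw [pow_add, pow_add, pow_one]
  ring

/-- The kernel of the trace map of a cubic extension of finite fields has `q ^ 2`
elements. -/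
lemma aux_card_trace_zero (F E : Type*) [Field F] [Field E] [Fintype F] [Fintype E] [Algebra F E]
    (q : ℕ) (hF : Fintype.card F = q) (hE : Fintype.card E = q ^ 3) :
    Nat.card {x : E // Algebra.trace F E x = 0} = q ^ 2 := by
  have hq2 : 2 ≤ q := hF ▸ Fintype.one_lt_card
  have hrank : Module.finrank F E = 3 := by
    have h := Module.card_eq_pow_finrank (K := F) (V := E)
    rw [hF, hE] at h
    exact (Nat.pow_right_injective hq2 h.symm)
  set t : E →ₗ[F] F := Algebra.trace F E with ht
  have hsurj : Function.Surjective t := Algebra.trace_surjective F E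
  have hker : Module.finrank F (LinearMap.ker t) = 2 := by
    have h := LinearMap.finrank_range_add_finrank_ker t
    rw [hrank, LinearMap.range_eq_top.mpr hsurj, finrank_top, Module.finrank_self] at h
    omega
  have e : {x : E // Algebra.trace F E x = 0} ≃ LinearMap.ker t :=
    Equiv.subtypeEquivRight fun x => by simp [LinearMap.mem_ker, ht]
  haveI : Fintype (LinearMap.ker t) := Fintype.ofFinite _
  rw [Nat.card_congr e, Nat.card_eq_fintype_card,
    Module.card_eq_pow_finrank (K := F) (V := LinearMap.ker t), hF, hker]

/-- Splitting a subtype of `Option` when the predicate holds at `none`. -/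
def optionSubtypeEquiv {α : Type*} {p : Option α → Prop} (h : p none) :
    {o : Option α // p o} ≃ Option {x : α // p (some x)} where
  toFun s := match s with
    | ⟨none, _⟩ => none
    | ⟨some x, hx⟩ => some ⟨x, hx⟩
  invFun t := match t with
    | none => ⟨none, h⟩
    | some y => ⟨some y.1, y.2⟩
  left_inv s := by rcases s with ⟨(_ | x), hx⟩ <;> rfl
  right_inv t := by rcases t with (_ | ⟨y, hy⟩) <;> rfl

/-- Splitting a subtype of `Option` when the predicate fails at `none`. -/
def optionSubtypeEquiv' {α : Type*} {p : Option α → Prop} (h : ¬ p none) :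
    {o : Option α // p o} ≃ {x : α // p (some x)} where
  toFun s := match s with
    | ⟨none, hx⟩ => absurd hx h
    | ⟨some x, hx⟩ => ⟨x, hx⟩
  invFun y := ⟨some y.1, y.2⟩
  left_inv s := by
    rcases s with ⟨(_ | x), hx⟩
    · exact absurd hx h
    · rfl
  right_inv y := rfl

/-- With `O` the set of `q^3 + 1` points `P(x) = ⟨(1, x, x^{q+q^2}, N(x))⟩` for `x ∈ F_{q^3}`
together with `P(∞) = ⟨(0,0,0,1)⟩`, the hyperplane `⟨(0,0,1,0)⟩^⊥` meets `O` in exactly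
`q^2 + 1` points and the hyperplane `⟨(1,0,0,1)⟩^⊥` meets `O` in exactly `q^2 + q + 1`
points. -/
theorem stmt13 (F E : Type*) [Field F] [Field E] [Fintype F] [Fintype E] [Algebra F E]
    (q : ℕ) (hF : Fintype.card F = q) (hE : Fintype.card E = q ^ 3)
    (A : (F × E × E × F) → (F × E × E × F) → F)
    (hA : ∀ u v : F × E × E × F,
      A u v = u.1 * v.2.2.2 - u.2.2.2 * v.1 +
        Algebra.trace F E (u.2.2.1 * v.2.1 - u.2.1 * v.2.2.1))
    (P : Option E → F × E × E × F)
    (hP : ∀ x : E, P (some x) = (1, x, x ^ (q + q ^ 2), Algebra.norm F x))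
    (hPinf : P none = ((0 : F), (0 : E), (0 : E), (1 : F))) :
    Nat.card {o : Option E // A (P o) ((0 : F), (0 : E), (1 : E), (0 : F)) = 0} = q ^ 2 + 1 ∧
    Nat.card {o : Option E // A (P o) ((1 : F), (0 : E), (0 : E), (1 : F)) = 0} =
      q ^ 2 + q + 1 := by
  have hq2 : 2 ≤ q := hF ▸ Fintype.one_lt_card
  constructor
  · -- first hyperplane
    set pr : Option E → Prop :=
      fun o => A (P o) ((0 : F), (0 : E), (1 : E), (0 : F)) = 0 with hpr
    have hnone : pr none := by
      rw [hpr]; simp only []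
      rw [hA, hPinf]; simp
    have hsome : ∀ x : E, pr (some x) ↔ Algebra.trace F E x = 0 := by
      intro x
      rw [hpr]; simp only []
      rw [hA, hP]
      simp [neg_eq_zero]
    have e : {o : Option E // pr o} ≃ Option {x : E // Algebra.trace F E x = 0} :=
      (optionSubtypeEquiv hnone).trans
        (Equiv.optionCongr (Equiv.subtypeEquivRight hsome))
    rw [Nat.card_congr e, Finite.card_option, aux_card_trace_zero F E q hF hE]
  · -- second hyperplane
    set pr : Option E → Prop :=
      fun o => A (P o) ((1 : F), (0 : E), (0 : E), (1 : F)) = 0 with hpr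
    have hnone : ¬ pr none := by
      rw [hpr]; simp only []
      rw [hA, hPinf]; simp
    have hsome : ∀ x : E, pr (some x) ↔ Algebra.norm F x = 1 := by
      intro x
      rw [hpr]; simp only []
      rw [hA, hP]
      have hh : (1 : F) * 1 - Algebra.norm F x * 1 +
          Algebra.trace F E (x ^ (q + q ^ 2) * 0 - x * 0) = 1 - Algebra.norm F x := by
        simp
      rw [hh]
      exact ⟨fun h => (sub_eq_zero.mp h).symm, fun h => sub_eq_zero.mpr h.symm⟩
    have e : {o : Option E // pr o} ≃ {x : E // Algebra.norm F x = 1} :=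
      (optionSubtypeEquiv' hnone).trans (Equiv.subtypeEquivRight hsome)
    have hnormpow : ∀ x : E, Algebra.norm F x = 1 ↔ x ^ (1 + q + q ^ 2) = 1 := by
      intro x
      rw [← aux_norm_eq_pow F E q hF hE x]
      constructor
      · intro h; rw [h, map_one]
      · intro h
        apply (algebraMap F E).injective
        rw [h, map_one]
    have e2 : {x : E // Algebra.norm F x = 1} ≃ {x : E // x ^ (1 + q + q ^ 2) = 1} :=
      Equiv.subtypeEquivRight fun x => hnormpow x
    have hdvd : (1 + q + q ^ 2) ∣ Fintype.card E - 1 := by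
      refine ⟨q - 1, ?_⟩
      rw [hE]
      obtain ⟨k, rfl⟩ : ∃ k, q = k + 1 := ⟨q - 1, by omega⟩
      have h1 : (k + 1) ^ 3 = k ^ 3 + 3 * k ^ 2 + 3 * k + 1 := by ring
      have h2 : k + 1 - 1 = k := by omega
      have h3 : (1 + (k + 1) + (k + 1) ^ 2) * k = k ^ 3 + 3 * k ^ 2 + 3 * k := by ring
      rw [h1, h2, h3]
      omega
    rw [Nat.card_congr e, Nat.card_congr e2,
      aux_card_pow_eq_one E (by positivity) hdvd]
    omega
end
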